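/- For λ_b > 0, β > 2, σ² ≥ 0, P > 0 and γ ≥ 0, the function F(γ) = 1 − 2πλ_b ∫_0^∞ x·exp(−πλ_b x²·(Z(γ) + 1) − (σ²/P)·γ·x^β) dx, where Z(γ) = (2γ/(β−2))·₂F₁(1,1−2/β;2−2/β;−γ), satisfies F(0) = 0, F is nondecreasing in γ, and F(γ) → 1 as γ → ∞. In the interference-limited case σ² = 0, F(γ) = 1 − 1/(Z(γ)+1) = Z(γ)/(Z(γ)+1). -/

import Mathlib

open MeasureTheory Set Real Filter

/-- ₂F₁(1, 1-2/β; 2-2/β; -γ) via the Euler integral representation (valid for γ ≥ 0). -/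
noncomputable def gauss2F1 (β γ : ℝ) : ℝ :=
  (1 - 2 / β) * ∫ t in (0:ℝ)..1, t ^ (-(2 / β)) / (1 + γ * t)

/-- Z(γ) = (2γ/(β-2)) ₂F₁(1, 1-2/β; 2-2/β; -γ). -/
noncomputable def Zfun (β γ : ℝ) : ℝ := 2 * γ / (β - 2) * gauss2F1 β γ

lemma gauss_int {b : ℝ} (hb : 0 < b) :
    ∫ x in Set.Ioi (0:ℝ), x * Real.exp (-(b * x ^ 2)) = 1 / (2 * b) := by
  have hd : ∀ x ∈ Set.Ici (0:ℝ),
      HasDerivAt (fun x : ℝ => -(1/(2*b)) * Real.exp (-(b * x ^ 2)))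
        (x * Real.exp (-(b * x ^ 2))) x := by
    intro x _
    have h1 : HasDerivAt (fun x : ℝ => -(b * x ^ 2)) (-(b * (2 * x))) x := by
      exact (((hasDerivAt_pow 2 x).const_mul b).neg).congr_deriv (by norm_num)
    have h2 := (h1.exp).const_mul (-(1/(2*b)))
    refine h2.congr_deriv ?_
    field_simp
  have hi : IntegrableOn (fun x : ℝ => x * Real.exp (-(b * x ^ 2))) (Set.Ioi 0) := by
    have := (integrable_mul_exp_neg_mul_sq hb).integrableOn (s := Set.Ioi (0:ℝ))
    simpa [neg_mul] using this
  have ht : Tendsto (fun x : ℝ => -(1/(2*b)) * Real.exp (-(b * x ^ 2))) atTop (nhds 0) := by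
    have : Tendsto (fun x : ℝ => -(b * x ^ 2)) atTop atBot := by
      apply tendsto_neg_atBot_iff.mpr
      exact (tendsto_pow_atTop two_ne_zero).const_mul_atTop hb
    simpa using (Real.tendsto_exp_atBot.comp this).const_mul (-(1/(2*b)))
  have := integral_Ioi_of_hasDerivAt_of_tendsto' hd hi ht
  rw [this]
  simp

lemma Zfun_eq (β γ : ℝ) :
    Zfun β γ = ∫ t in (0:ℝ)..1,
      2 * (1 - 2 / β) / (β - 2) * (γ / (1 + γ * t)) * t ^ (-(2 / β)) := by
  rw [Zfun, gauss2F1, ← mul_assoc, ← intervalIntegral.integral_const_mul]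
  apply intervalIntegral.integral_congr
  intro t _
  ring

lemma Zint {β : ℝ} (hβ : 2 < β) {γ : ℝ} (hγ : 0 ≤ γ) :
    IntervalIntegrable
      (fun t : ℝ => 2 * (1 - 2 / β) / (β - 2) * (γ / (1 + γ * t)) * t ^ (-(2 / β)))
      volume 0 1 := by
  have h1 : IntervalIntegrable (fun t : ℝ => t ^ (-(2 / β))) volume 0 1 := by
    apply intervalIntegral.intervalIntegrable_rpow'
    have : 2 / β < 1 := (div_lt_one (by linarith)).mpr (by linarith)
    linarith
  have h2 : ContinuousOn (fun t : ℝ => 2 * (1 - 2 / β) / (β - 2) * (γ / (1 + γ * t)))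
      (Set.uIcc (0:ℝ) 1) := by
    apply ContinuousOn.mul continuousOn_const
    apply ContinuousOn.div continuousOn_const (by fun_prop)
    intro t ht
    rw [Set.uIcc_of_le zero_le_one] at ht
    nlinarith [ht.1, mul_nonneg hγ ht.1]
  simpa [mul_comm] using h1.continuousOn_mul h2

lemma Zfun_nonneg {β : ℝ} (hβ : 2 < β) {γ : ℝ} (hγ : 0 ≤ γ) : 0 ≤ Zfun β γ := by
  rw [Zfun_eq]
  apply intervalIntegral.integral_nonneg zero_le_one
  intro t ht
  have h1 : (0:ℝ) ≤ 2 * (1 - 2 / β) / (β - 2) := by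
    have : 2 / β < 1 := (div_lt_one (by linarith)).mpr (by linarith)
    exact div_nonneg (by linarith) (by linarith)
  have h2 : (0:ℝ) ≤ γ / (1 + γ * t) := by
    apply div_nonneg hγ
    nlinarith [ht.1, mul_nonneg hγ ht.1]
  have h3 : (0:ℝ) ≤ t ^ (-(2 / β)) := Real.rpow_nonneg ht.1 _
  positivity

lemma Zfun_mono {β : ℝ} (hβ : 2 < β) : MonotoneOn (Zfun β) (Set.Ici 0) := by
  intro γ1 h1 γ2 h2 h12
  simp only [Set.mem_Ici] at h1 h2
  rw [Zfun_eq, Zfun_eq]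
  apply intervalIntegral.integral_mono_on zero_le_one (Zint hβ h1) (Zint hβ h2)
  intro t ht
  have hc : (0:ℝ) ≤ 2 * (1 - 2 / β) / (β - 2) := by
    have : 2 / β < 1 := (div_lt_one (by linarith)).mpr (by linarith)
    exact div_nonneg (by linarith) (by linarith)
  have h3 : (0:ℝ) ≤ t ^ (-(2 / β)) := Real.rpow_nonneg ht.1 _
  have hd1 : (0:ℝ) < 1 + γ1 * t := by nlinarith [ht.1, mul_nonneg h1 ht.1]
  have hd2 : (0:ℝ) < 1 + γ2 * t := by nlinarith [ht.1, mul_nonneg h2 ht.1]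
  have key : γ1 / (1 + γ1 * t) ≤ γ2 / (1 + γ2 * t) := by
    rw [div_le_div_iff₀ hd1 hd2]
    nlinarith [mul_nonneg (mul_nonneg h1 h2) ht.1]
  have := mul_le_mul_of_nonneg_left key hc
  exact mul_le_mul_of_nonneg_right this h3

lemma log_int {γ : ℝ} (hγ : 0 ≤ γ) :
    ∫ t in (0:ℝ)..1, γ / (1 + γ * t) = Real.log (1 + γ) := by
  have hpos : ∀ t : ℝ, 0 ≤ t → (0:ℝ) < 1 + γ * t := by
    intro t ht; nlinarith [mul_nonneg hγ ht]
  have hd : ∀ t ∈ Set.uIcc (0:ℝ) 1,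
      HasDerivAt (fun t : ℝ => Real.log (1 + γ * t)) (γ / (1 + γ * t)) t := by
    intro t ht
    rw [Set.uIcc_of_le zero_le_one] at ht
    have h1 : HasDerivAt (fun t : ℝ => 1 + γ * t) γ t := by
      simpa using ((hasDerivAt_id t).const_mul γ).const_add 1
    exact h1.log (ne_of_gt (hpos t ht.1))
  have hi : IntervalIntegrable (fun t : ℝ => γ / (1 + γ * t)) volume 0 1 := by
    apply ContinuousOn.intervalIntegrable
    apply ContinuousOn.div continuousOn_const (by fun_prop)
    intro t ht
    rw [Set.uIcc_of_le zero_le_one] at ht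
    exact ne_of_gt (hpos t ht.1)
  rw [intervalIntegral.integral_eq_sub_of_hasDerivAt hd hi]
  simp

lemma Zfun_lb {β : ℝ} (hβ : 2 < β) {γ : ℝ} (hγ : 0 ≤ γ) :
    2 * (1 - 2 / β) / (β - 2) * Real.log (1 + γ) ≤ Zfun β γ := by
  have h2β : 2 / β < 1 := (div_lt_one (by linarith)).mpr (by linarith)
  have hc : (0:ℝ) ≤ 2 * (1 - 2 / β) / (β - 2) := div_nonneg (by linarith) (by linarith)
  rw [← log_int hγ, ← intervalIntegral.integral_const_mul, Zfun_eq]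
  have hi : IntervalIntegrable (fun t : ℝ => 2 * (1 - 2 / β) / (β - 2) * (γ / (1 + γ * t)))
      volume 0 1 := by
    apply ContinuousOn.intervalIntegrable
    apply ContinuousOn.mul continuousOn_const
    apply ContinuousOn.div continuousOn_const (by fun_prop)
    intro t ht
    rw [Set.uIcc_of_le zero_le_one] at ht
    nlinarith [ht.1, mul_nonneg hγ ht.1]
  apply intervalIntegral.integral_mono_ae_restrict zero_le_one hi (Zint hβ hγ)
  have h0 : ∀ᵐ t : ℝ, t ≠ 0 := compl_mem_ae_iff.mpr (measure_singleton 0)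
  filter_upwards [ae_restrict_mem measurableSet_Icc, ae_restrict_of_ae h0] with t ht ht0
  have htpos : 0 < t := lt_of_le_of_ne ht.1 (Ne.symm ht0)
  have h1 : (1:ℝ) ≤ t ^ (-(2 / β)) :=
    Real.one_le_rpow_of_pos_of_le_one_of_nonpos htpos ht.2 (neg_nonpos.mpr (by positivity))
  have h2 : (0:ℝ) ≤ 2 * (1 - 2 / β) / (β - 2) * (γ / (1 + γ * t)) := by
    apply mul_nonneg hc
    apply div_nonneg hγ
    nlinarith [ht.1, mul_nonneg hγ ht.1]
  exact le_mul_of_one_le_right h2 h1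

lemma Zfun_tendsto {β : ℝ} (hβ : 2 < β) : Tendsto (Zfun β) atTop atTop := by
  have h2β : 2 / β < 1 := (div_lt_one (by linarith)).mpr (by linarith)
  have hc : (0:ℝ) < 2 * (1 - 2 / β) / (β - 2) := div_pos (by linarith) (by linarith)
  apply tendsto_atTop_mono' atTop ?_ (Tendsto.const_mul_atTop hc
    (Real.tendsto_log_atTop.comp (tendsto_atTop_add_const_left _ 1 tendsto_id)))
  filter_upwards [eventually_ge_atTop (0:ℝ)] with γ hγ
  exact Zfun_lb hβ hγ

/-- The SINR CDF of a typical user without cache (Lemma 3):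
F(0)=0, F is nondecreasing, F(γ) → 1 as γ → ∞, and in the interference-limited case
σ² = 0 it has the closed form Z(γ)/(Z(γ)+1). -/
theorem normal_user_sinr_cdf (lb β σ2 P : ℝ) (hlb : 0 < lb) (hβ : 2 < β)
    (hσ : 0 ≤ σ2) (hP : 0 < P)
    (F : ℝ → ℝ)
    (hF : ∀ γ, F γ = 1 - 2 * π * lb * ∫ x in Set.Ioi (0:ℝ),
        x * Real.exp (-(π * lb * x ^ 2 * (Zfun β γ + 1)) - σ2 / P * γ * x ^ β)) :
    F 0 = 0 ∧ MonotoneOn F (Set.Ici 0) ∧ Tendsto F atTop (nhds 1) ∧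
    (σ2 = 0 → ∀ γ, 0 ≤ γ → F γ = Zfun β γ / (Zfun β γ + 1)) := by
  have hπ : (0:ℝ) < π := Real.pi_pos
  have hπlb : 0 < π * lb := by positivity
  set e : ℝ → ℝ → ℝ := fun γ x =>
    x * Real.exp (-(π * lb * x ^ 2 * (Zfun β γ + 1)) - σ2 / P * γ * x ^ β) with he
  -- continuity / measurability on Ioi 0
  have hcont : ∀ γ : ℝ, ContinuousOn (e γ) (Set.Ioi 0) := by
    intro γ
    have hrp : ContinuousOn (fun x : ℝ => x ^ β) (Set.Ioi 0) := fun x hx =>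
      (Real.continuousAt_rpow_const x β (Or.inl (ne_of_gt hx))).continuousWithinAt
    apply ContinuousOn.mul continuousOn_id
    apply Real.continuous_exp.comp_continuousOn
    exact ContinuousOn.sub (by fun_prop) (ContinuousOn.mul continuousOn_const hrp)
  have hmeas : ∀ γ : ℝ, AEStronglyMeasurable (e γ) (volume.restrict (Set.Ioi 0)) :=
    fun γ => (hcont γ).aestronglyMeasurable measurableSet_Ioi
  -- pointwise bound and nonnegativity
  have hbnd : ∀ γ : ℝ, 0 ≤ γ → ∀ x ∈ Set.Ioi (0:ℝ),
      e γ x ≤ x * Real.exp (-(π * lb * (Zfun β γ + 1) * x ^ 2)) := by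
    intro γ hγ x hx
    rw [Set.mem_Ioi] at hx
    apply mul_le_mul_of_nonneg_left _ hx.le
    apply Real.exp_le_exp.mpr
    have hxb : (0:ℝ) ≤ x ^ β := Real.rpow_nonneg hx.le _
    have h1 : 0 ≤ σ2 / P * γ * x ^ β :=
      mul_nonneg (mul_nonneg (div_nonneg hσ hP.le) hγ) hxb
    nlinarith
  have hbnd' : ∀ γ : ℝ, 0 ≤ γ → ∀ x ∈ Set.Ioi (0:ℝ),
      e γ x ≤ x * Real.exp (-(π * lb * x ^ 2)) := by
    intro γ hγ x hx
    refine (hbnd γ hγ x hx).trans ?_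
    rw [Set.mem_Ioi] at hx
    apply mul_le_mul_of_nonneg_left _ hx.le
    apply Real.exp_le_exp.mpr
    have hZ : 0 ≤ Zfun β γ := Zfun_nonneg hβ hγ
    nlinarith [mul_nonneg (mul_nonneg hπlb.le hZ) (sq_nonneg x)]
  have henn : ∀ γ : ℝ, ∀ x ∈ Set.Ioi (0:ℝ), 0 ≤ e γ x := by
    intro γ x hx
    rw [Set.mem_Ioi] at hx
    exact mul_nonneg hx.le (Real.exp_pos _).le
  -- integrability
  have hgint : IntegrableOn (fun x : ℝ => x * Real.exp (-(π * lb * x ^ 2))) (Set.Ioi 0) := by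
    have := (integrable_mul_exp_neg_mul_sq hπlb).integrableOn (s := Set.Ioi (0:ℝ))
    simpa [neg_mul] using this
  have hint : ∀ γ : ℝ, 0 ≤ γ → IntegrableOn (e γ) (Set.Ioi 0) := by
    intro γ hγ
    apply Integrable.mono hgint (hmeas γ)
    filter_upwards [ae_restrict_mem measurableSet_Ioi] with x hx
    rw [Real.norm_eq_abs, Real.norm_eq_abs, abs_of_nonneg (henn γ x hx),
      abs_of_nonneg (by rw [Set.mem_Ioi] at hx; positivity)]
    exact hbnd' γ hγ x hx
  -- part 1: F 0 = 0
  have hz0 : Zfun β 0 = 0 := by simp [Zfun]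
  have part1 : F 0 = 0 := by
    rw [hF 0, hz0]
    have hx0 : ∀ x : ℝ, -(π * lb * x ^ 2 * (0 + 1)) - σ2 / P * 0 * x ^ β
        = -(π * lb * x ^ 2) := fun x => by ring
    simp_rw [hx0]
    rw [gauss_int hπlb]
    field_simp
    ring
  -- part 2: monotone
  have part2 : MonotoneOn F (Set.Ici 0) := by
    intro γ1 h1 γ2 h2 h12
    rw [Set.mem_Ici] at h1 h2
    rw [hF γ1, hF γ2]
    have hI : (∫ x in Set.Ioi (0:ℝ), e γ2 x) ≤ ∫ x in Set.Ioi (0:ℝ), e γ1 x := by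
      apply setIntegral_mono_on (hint γ2 h2) (hint γ1 h1) measurableSet_Ioi
      intro x hx
      rw [Set.mem_Ioi] at hx
      apply mul_le_mul_of_nonneg_left _ hx.le
      apply Real.exp_le_exp.mpr
      have hZ : Zfun β γ1 ≤ Zfun β γ2 := Zfun_mono hβ h1 h2 h12
      have hxb : (0:ℝ) ≤ x ^ β := Real.rpow_nonneg hx.le _
      nlinarith [mul_nonneg (mul_nonneg hπlb.le (sq_nonneg x)) (sub_nonneg.mpr hZ),
        mul_nonneg (mul_nonneg (div_nonneg hσ hP.le) (sub_nonneg.mpr h12)) hxb]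
    have := mul_le_mul_of_nonneg_left hI (by positivity : (0:ℝ) ≤ 2 * π * lb)
    linarith
  -- part 3: tendsto
  have part3 : Tendsto F atTop (nhds 1) := by
    have hFeq : F = fun γ => 1 - 2 * π * lb * ∫ x in Set.Ioi (0:ℝ), e γ x := funext hF
    have hub : ∀ γ : ℝ, 0 ≤ γ →
        2 * π * lb * (∫ x in Set.Ioi (0:ℝ), e γ x) ≤ 1 / (Zfun β γ + 1) := by
      intro γ hγ
      have hZ : 0 ≤ Zfun β γ := Zfun_nonneg hβ hγ
      have hb' : 0 < π * lb * (Zfun β γ + 1) := by positivity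
      have hIle : (∫ x in Set.Ioi (0:ℝ), e γ x)
          ≤ ∫ x in Set.Ioi (0:ℝ), x * Real.exp (-(π * lb * (Zfun β γ + 1) * x ^ 2)) := by
        apply setIntegral_mono_on (hint γ hγ) _ measurableSet_Ioi (hbnd γ hγ)
        have := (integrable_mul_exp_neg_mul_sq hb').integrableOn (s := Set.Ioi (0:ℝ))
        simpa [neg_mul] using this
      rw [gauss_int hb'] at hIle
      have h2 := mul_le_mul_of_nonneg_left hIle (by positivity : (0:ℝ) ≤ 2 * π * lb)
      refine h2.trans (le_of_eq ?_)
      field_simp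
    have hlb0 : ∀ γ : ℝ, 0 ≤ γ → 0 ≤ 2 * π * lb * ∫ x in Set.Ioi (0:ℝ), e γ x := by
      intro γ hγ
      have : 0 ≤ ∫ x in Set.Ioi (0:ℝ), e γ x := setIntegral_nonneg measurableSet_Ioi (henn γ)
      positivity
    have htends : Tendsto (fun γ => 2 * π * lb * ∫ x in Set.Ioi (0:ℝ), e γ x)
        atTop (nhds 0) := by
      have hZ1 : Tendsto (fun γ => Zfun β γ + 1) atTop atTop :=
        tendsto_atTop_add_const_right _ 1 (Zfun_tendsto hβ)
      have hupper : Tendsto (fun γ => 1 / (Zfun β γ + 1)) atTop (nhds 0) := by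
        have h := hZ1.inv_tendsto_atTop; simp only [one_div]; exact h
      apply tendsto_of_tendsto_of_tendsto_of_le_of_le' tendsto_const_nhds hupper
      · filter_upwards [eventually_ge_atTop (0:ℝ)] with γ hγ using hlb0 γ hγ
      · filter_upwards [eventually_ge_atTop (0:ℝ)] with γ hγ using hub γ hγ
    rw [hFeq]
    simpa using (tendsto_const_nhds (x := (1:ℝ)) (f := atTop)).sub htends
  refine ⟨part1, part2, part3, ?_⟩
  -- part 4: interference-limited closed form
  intro hσ0 γ hγ
  subst hσ0
  rw [hF γ]
  have hZ : 0 ≤ Zfun β γ := Zfun_nonneg hβ hγ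
  have hb' : 0 < π * lb * (Zfun β γ + 1) := by positivity
  have hx0 : ∀ x : ℝ, -(π * lb * x ^ 2 * (Zfun β γ + 1)) - 0 / P * γ * x ^ β
      = -(π * lb * (Zfun β γ + 1) * x ^ 2) := fun x => by ring
  simp_rw [hx0]
  rw [gauss_int hb']
  have hZ1 : Zfun β γ + 1 ≠ 0 := by positivity
  field_simp
  ring
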